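/- Consider the stochastic volatility model X_i = σ_i Y_i, where (σ_i) is a stationary sequence with P(a ≤ σ₁ ≤ b)=1 for constants 0<a<1<b, and (Y_i) is an iid sequence independent of (σ_i) with distribution F_Y(x)=1−exp(−S_Y(x)) such that F_Y∈MDA(Λ)∩𝒮 with tail-balance condition, and S_Y satisfies the Bojanic–Seneta condition (x S_Y′(x)/S_Y(x))·log S_Y(x)→0. Assume the distribution F of X is subexponential; then S(x)=−log F̄(x)=S_Y(x)(1+o(1)), and with g(x)=x/S(x) (assumed increasing), for every ε>0 and h=1,…,m, P(|X_0|>εg(x), |X_h|>εx)/F̄(x) ≤ exp(−S_Y(x)(1+o(1))) → 0 as x→∞, so condition C3 holds ((σ_i) being m-dependent makes (X_i) m-dependent). -/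

import Mathlib

open MeasureTheory ProbabilityTheory Filter Set Asymptotics
open scoped ENNReal NNReal Topology

namespace PLD

variable {Ω : Type*} [MeasureSpace Ω]

/-- Probability of an event, as a real number. -/
noncomputable def pr (A : Set Ω) : ℝ := (ℙ A).toReal

/-- The tail `P(X > x)` of a real random variable. -/
noncomputable def tail (X : Ω → ℝ) (x : ℝ) : ℝ := pr {ω | x < X ω}

/-- The two-sided tail `P(|X| > x)`. -/
noncomputable def atail (X : Ω → ℝ) (x : ℝ) : ℝ := pr {ω | x < |X ω|}

/-- The tail of a measure on `ℝ`. -/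
noncomputable def mtail (μ : Measure ℝ) (x : ℝ) : ℝ := (μ (Set.Ioi x)).toReal

/-- Partial sums `X_0 + ⋯ + X_{n-1}`. -/
def psum (X : ℕ → Ω → ℝ) (n : ℕ) (ω : Ω) : ℝ := ∑ i ∈ Finset.range n, X i ω

/-- A function is slowly varying at infinity. -/
def SlowlyVarying (L : ℝ → ℝ) : Prop :=
  ∀ c : ℝ, 0 < c → Tendsto (fun x => L (c * x) / L x) atTop (𝓝 1)

/-- A function is regularly varying of index `ρ` at infinity. -/
def RegularlyVaryingFun (f : ℝ → ℝ) (ρ : ℝ) : Prop :=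
  ∀ c : ℝ, 0 < c → Tendsto (fun x => f (c * x) / f x) atTop (𝓝 (c ^ ρ))

/-- The right tail of `X` is regularly varying with index `α`:
`P(X > x) = L(x) x^{-α}` for a slowly varying `L`. -/
def RegVaryingTail (X : Ω → ℝ) (α : ℝ) : Prop :=
  ∃ L : ℝ → ℝ, SlowlyVarying L ∧ ∀ᶠ x in atTop, tail X x = L x * x ^ (-α)

/-- Tail balance condition with constants `pp > 0`, `pm ≥ 0`, `pp + pm = 1`. -/
structure TailBalance (X : Ω → ℝ) (pp pm : ℝ) : Prop where
  pos : 0 < pp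
  nonneg : 0 ≤ pm
  sum_eq_one : pp + pm = 1
  plus : Tendsto (fun x => tail X x / atail X x) atTop (𝓝 pp)
  minus : Tendsto (fun x => tail (fun ω => -X ω) x / atail X x) atTop (𝓝 pm)

/-- `n`-fold convolution power of a measure on `ℝ` (law of the sum of `n` iid copies). -/
noncomputable def convPow (μ : Measure ℝ) : ℕ → Measure ℝ
  | 0 => Measure.dirac 0
  | n + 1 => Measure.map (fun p : ℝ × ℝ => p.1 + p.2) ((convPow μ n).prod μ)

/-- A distribution concentrated on `[0,∞)` is subexponential:
`P(S_n > x) ∼ n P(X > x)` as `x → ∞` for every `n ≥ 2`. -/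
def SubexponentialMeasure (μ : Measure ℝ) : Prop :=
  μ (Set.Iio 0) = 0 ∧
  ∀ n : ℕ, 2 ≤ n →
    Tendsto (fun x => mtail (convPow μ n) x / mtail μ x) atTop (𝓝 (n : ℝ))

/-- Two-sided subexponential class `𝒮`: the positive part `X⁺` has a subexponential
distribution and the tail balance condition holds. -/
def ClassS (X : Ω → ℝ) (pp pm : ℝ) : Prop :=
  SubexponentialMeasure (Measure.map (fun ω => max (X ω) 0) ℙ) ∧ TailBalance X pp pm

/-- `a` is an auxiliary function for the (tail-) function `T` in the Gumbel MDA sense: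
`T(x + y a(x))/T(x) → e^{-y}`. -/
def IsAuxiliary (T : ℝ → ℝ) (a : ℝ → ℝ) : Prop :=
  (∀ᶠ x in atTop, 0 < a x) ∧
  ∀ y : ℝ, Tendsto (fun x => T (x + y * a x) / T x) atTop (𝓝 (Real.exp (-y)))

/-- `F ∈ MDA(Λ)` (Gumbel maximum domain of attraction, infinite right endpoint),
via the Pickands–Balkema–de Haan characterization. -/
def GumbelMDA (X : Ω → ℝ) : Prop := ∃ a : ℝ → ℝ, IsAuxiliary (tail X) a

/-- Class `LN`: subexponential distributions with `F̄(x) = exp(-S(x))`, `S` slowly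
varying and `S(x)/log x → ∞`. -/
structure ClassLN (X : Ω → ℝ) (S : ℝ → ℝ) (pp pm : ℝ) : Prop where
  classS : ClassS X pp pm
  tail_eq : ∀ᶠ x in atTop, tail X x = Real.exp (-S x)
  slow : SlowlyVarying S
  heavy : Tendsto (fun x => S x / Real.log x) atTop atTop

/-- Strict stationarity of a sequence of random variables. -/
def Stationary (X : ℕ → Ω → ℝ) : Prop :=
  ∀ (k n : ℕ),
    Measure.map (fun ω => fun i : Fin n => X (k + i) ω) ℙ
      = Measure.map (fun ω => fun i : Fin n => X i ω) ℙ

/-- `m`-dependence: the σ-fields generated by `(X_s, s ≤ t)` and `(X_s, s ≥ t+h)`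
are independent whenever `h > m`. -/
def MDep (X : ℕ → Ω → ℝ) (m : ℕ) : Prop :=
  ∀ t h : ℕ, m < h →
    Indep (⨆ s ∈ Set.Iic t, MeasurableSpace.comap (X s) inferInstance)
          (⨆ s ∈ Set.Ici (t + h), MeasurableSpace.comap (X s) inferInstance) ℙ

/-- `sup_{x > u_n} |f_n(x)| → 0` as `n → ∞`. -/
def UnifSmall (u : ℕ → ℝ) (f : ℕ → ℝ → ℝ) : Prop :=
  ∀ ε : ℝ, 0 < ε → ∀ᶠ n in atTop, ∀ x : ℝ, u n < x → |f n x| < ε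

/-- An iid sequence (indexed by `ℕ`). -/
def IID (Z : ℕ → Ω → ℝ) : Prop :=
  iIndepFun Z ℙ ∧
  ∀ j, Measure.map (Z j) ℙ = Measure.map (Z 0) ℙ

/-- An iid sequence indexed by `ℤ`. -/
def IIDZ (Z : ℤ → Ω → ℝ) : Prop :=
  iIndepFun Z ℙ ∧
  ∀ j, Measure.map (Z j) ℙ = Measure.map (Z 0) ℙ

/-- Condition (C) of Mikosch–Rodionov for the sequence `X` with hazard function `S`,
threshold function `g` and separating sequence `t`. -/
structure CondC (X : ℕ → Ω → ℝ) (m : ℕ) (S g : ℝ → ℝ) (t : ℕ → ℝ) : Prop where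
  /- C1 -/
  g_mono : ∃ x₀ : ℝ, MonotoneOn g (Set.Ici x₀)
  g_tendsto : Tendsto g atTop atTop
  g_le : ∃ C : ℝ, 0 < C ∧ ∀ᶠ x in atTop, g x ≤ C * x / S x
  /- C2 -/
  t_tendsto : Tendsto t atTop atTop
  S_unif : ∀ δ : ℝ, 0 < δ →
    UnifSmall (fun n => t n * δ) (fun _ x => S x / S (g x) - 1)
  g_sqrt : Tendsto (fun n => g (t n) / Real.sqrt n) atTop atTop
  iid_ld : ∀ δ : ℝ, 0 < δ → UnifSmall (fun n => t n * δ)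
    (fun n x => mtail (convPow (Measure.map (X 0) ℙ) n) x / (n * tail (X 0) x) - 1)
  /- C3 -/
  mdep : MDep X m
  anti : ∀ ε : ℝ, 0 < ε → ∀ h : ℕ, 1 ≤ h → h ≤ m →
    Tendsto (fun x => pr {ω | ε * g x < |X 0 ω| ∧ ε * x < |X h ω|} / tail (X 0) x)
      atTop (𝓝 0)

/-- Condition (RV) of Mikosch–Rodionov. -/
structure CondRV (X : ℕ → Ω → ℝ) (m : ℕ) (α : ℝ) (pp pm : ℝ) (t : ℕ → ℝ) : Prop where
  /- RV1 -/
  t_growth : Tendsto (fun n : ℕ => t n / Real.sqrt (n * Real.log n)) atTop atTop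
  /- RV2 -/
  alpha_gt_two : 2 < α
  rv : RegVaryingTail (X 0) α
  balance : TailBalance (X 0) pp pm
  /- RV3 -/
  mdep : MDep X m
  anti : ∀ h : ℕ, 1 ≤ h → h ≤ m →
    Tendsto (fun x => pr {ω | x < |X h ω| ∧ x < |X 0 ω|} / tail (X 0) x) atTop (𝓝 0)

/-- A (mean-zero or general) Gaussian process: all finite linear combinations
are one-dimensional Gaussian. -/
def GaussianProcess (Y : ℕ → Ω → ℝ) : Prop :=
  ∀ (s : Finset ℕ) (c : ℕ → ℝ), ∃ (mu : ℝ) (v : ℝ≥0),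
    Measure.map (fun ω => ∑ i ∈ s, c i * Y i ω) ℙ = gaussianReal mu v

/-- Entries of the sample covariance matrix: `S_{ij}^{(n)} = ∑_{t<n} X_{it} X_{jt}`. -/
def sij (X : ℕ → ℕ → Ω → ℝ) (i j n : ℕ) (ω : Ω) : ℝ :=
  ∑ t ∈ Finset.range n, X i t ω * X j t ω

/-- `max_{i ≤ p} (S_{ii}^{(n)} - n e)`. -/
noncomputable def diagMax (X : ℕ → ℕ → Ω → ℝ) (p n : ℕ) (e : ℝ) (ω : Ω) : ℝ :=
  ⨆ i : Fin p, (sij X i i n ω - n * e)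

/-- `max_{1 ≤ i < j ≤ p} |S_{ij}^{(n)} - n e|`. -/
noncomputable def offMaxAbs (X : ℕ → ℕ → Ω → ℝ) (p n : ℕ) (e : ℝ) (ω : Ω) : ℝ :=
  ⨆ q : {q : Fin p × Fin p // q.1 < q.2}, |sij X q.1.1 q.1.2 n ω - n * e|

/-- `max_{1 ≤ i < j ≤ p} (S_{ij}^{(n)} - n e)`. -/
noncomputable def offMax (X : ℕ → ℕ → Ω → ℝ) (p n : ℕ) (e : ℝ) (ω : Ω) : ℝ :=
  ⨆ q : {q : Fin p × Fin p // q.1 < q.2}, (sij X q.1.1 q.1.2 n ω - n * e)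

/-- The rows `(X_{i·})` of the field are iid sequences. -/
def RowsIID (X : ℕ → ℕ → Ω → ℝ) : Prop :=
  iIndepFun
    (fun i ω => fun t => X i t ω) ℙ ∧
  ∀ i, Measure.map (fun ω => fun t => X i t ω) ℙ
      = Measure.map (fun ω => fun t => X 0 t ω) ℙ



/-- Monotone-derivative trick: if `|F'| ≤ η / t` on `[x₀, ∞)` then
`|F t - F s| ≤ η (log t - log s)`. -/
lemma abs_sub_le_of_deriv_bound {F F' : ℝ → ℝ} {x₀ η : ℝ} (hx₀ : 0 < x₀)
    (hF : ∀ t, x₀ ≤ t → HasDerivAt F (F' t) t)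
    (hd : ∀ t, x₀ ≤ t → |F' t| ≤ η / t) :
    ∀ s t, x₀ ≤ s → s ≤ t → |F t - F s| ≤ η * (Real.log t - Real.log s) := by
  have key : ∀ (G : ℝ → ℝ) (G' : ℝ → ℝ), (∀ u, x₀ ≤ u → HasDerivAt G (G' u) u) →
      (∀ u, x₀ ≤ u → 0 ≤ G' u) → MonotoneOn G (Set.Ici x₀) := by
    intro G G' hG hG'
    apply monotoneOn_of_deriv_nonneg (convex_Ici x₀)
    · exact fun u hu => (hG u hu).continuousAt.continuousWithinAt
    · intro u hu
      rw [interior_Ici] at hu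
      exact (hG u hu.le).differentiableAt.differentiableWithinAt
    · intro u hu
      rw [interior_Ici] at hu
      rw [(hG u hu.le).deriv]
      exact hG' u hu.le
  intro s t hs hst
  have hG : MonotoneOn (fun u => η * Real.log u - F u) (Set.Ici x₀) := by
    apply key _ (fun u => η / u - F' u)
    · intro u hu
      have hu0 : (0:ℝ) < u := lt_of_lt_of_le hx₀ hu
      have h1 : HasDerivAt (fun u => η * Real.log u) (η / u) u := by
        simpa [div_eq_mul_inv] using (Real.hasDerivAt_log hu0.ne').const_mul η
      exact h1.sub (hF u hu)
    · intro u hu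
      have h1 : F' u ≤ η / u := (abs_le.mp (hd u hu)).2
      linarith
  have hH : MonotoneOn (fun u => η * Real.log u + F u) (Set.Ici x₀) := by
    apply key _ (fun u => η / u + F' u)
    · intro u hu
      have hu0 : (0:ℝ) < u := lt_of_lt_of_le hx₀ hu
      have h1 : HasDerivAt (fun u => η * Real.log u) (η / u) u := by
        simpa [div_eq_mul_inv] using (Real.hasDerivAt_log hu0.ne').const_mul η
      exact h1.add (hF u hu)
    · intro u hu
      have h1 : -(η / u) ≤ F' u := (abs_le.mp (hd u hu)).1
      linarith
  have h2 := hG hs (le_trans hs hst) hst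
  have h3 := hH hs (le_trans hs hst) hst
  simp only at h2 h3
  rw [abs_le]
  constructor <;> linarith

lemma ratio_lemma {S : ℝ → ℝ} (hdiff : Differentiable ℝ S)
    (htop : Tendsto S atTop atTop)
    (hBS : Tendsto (fun x => x * deriv S x / S x * Real.log (S x)) atTop (𝓝 0))
    {u : ℝ → ℝ} {c₁ c₂ : ℝ} (hc₁ : 0 < c₁)
    (hu : ∀ᶠ x in atTop, c₁ * x / S x ≤ u x ∧ u x ≤ c₂ * x) :
    Tendsto u atTop atTop ∧ Tendsto (fun x => S (u x) / S x) atTop (𝓝 1) := by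
  have keybounds : ∀ η : ℝ, 0 < η → ∃ x₀ : ℝ, 1 ≤ x₀ ∧ (∀ t, x₀ ≤ t → Real.exp 2 ≤ S t) ∧
      (∀ t, x₀ ≤ t → |deriv S t / S t| ≤ η / t) ∧
      (∀ t, x₀ ≤ t → |Real.log (S t) * (deriv S t / S t)| ≤ η / t) := by
    intro η hη
    have h1 : ∀ᶠ t in atTop, Real.exp 2 ≤ S t := htop.eventually_ge_atTop _
    have h2 : ∀ᶠ t in atTop, |t * deriv S t / S t * Real.log (S t)| ≤ η := by
      filter_upwards [NormedAddCommGroup.tendsto_nhds_zero.mp hBS η hη] with t ht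
      rw [Real.norm_eq_abs] at ht; exact ht.le
    rcases eventually_atTop.mp (h1.and h2) with ⟨x₀', hx₀'⟩
    have main : ∀ t, max x₀' 1 ≤ t → |deriv S t / S t| ≤ η / t ∧
        |Real.log (S t) * (deriv S t / S t)| ≤ η / t := by
      intro t ht
      obtain ⟨hS2, habs⟩ := hx₀' t (le_trans (le_max_left _ _) ht)
      have ht1 : (1:ℝ) ≤ t := le_trans (le_max_right _ _) ht
      have ht0 : (0:ℝ) < t := by linarith
      have hSpos : (0:ℝ) < S t := lt_of_lt_of_le (Real.exp_pos 2) hS2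
      have hL2 : (2:ℝ) ≤ Real.log (S t) := by
        rw [Real.le_log_iff_exp_le hSpos]; exact hS2
      have heq : t * deriv S t / S t * Real.log (S t)
          = t * (Real.log (S t) * (deriv S t / S t)) := by ring
      rw [heq, abs_mul, abs_of_pos ht0] at habs
      have hmain : |Real.log (S t) * (deriv S t / S t)| ≤ η / t := by
        rw [le_div_iff₀ ht0]; nlinarith [abs_nonneg (Real.log (S t) * (deriv S t / S t))]
      refine ⟨?_, hmain⟩
      calc |deriv S t / S t| ≤ |Real.log (S t) * (deriv S t / S t)| := by
            rw [abs_mul]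
            nlinarith [abs_nonneg (deriv S t / S t),
              abs_of_pos (show (0:ℝ) < Real.log (S t) by linarith)]
        _ ≤ η / t := hmain
    exact ⟨max x₀' 1, le_max_right _ _,
      fun t ht => (hx₀' t (le_trans (le_max_left _ _) ht)).1,
      fun t ht => (main t ht).1, fun t ht => (main t ht).2⟩
  -- the log-derivative as a HasDerivAt statement
  have hψ : ∀ t : ℝ, 0 < S t → HasDerivAt (fun x => Real.log (S x)) (deriv S t / S t) t := by
    intro t hSt
    have := (Real.hasDerivAt_log hSt.ne').comp t (hdiff t).hasDerivAt
    rw [div_eq_inv_mul]; exact this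
  -- Step B : x / S x → ∞, hence u → ∞
  obtain ⟨x₁, hx₁1, hx₁S, hx₁d, -⟩ := keybounds (1/2) (by norm_num)
  have hx₁0 : (0:ℝ) < x₁ := by linarith
  have hSpos₁ : ∀ t, x₁ ≤ t → 0 < S t := fun t ht =>
    lt_of_lt_of_le (Real.exp_pos 2) (hx₁S t ht)
  have hlogbound : ∀ t, x₁ ≤ t → Real.log (S t) ≤ Real.log (S x₁) +
      (1/2) * (Real.log t - Real.log x₁) := by
    intro t ht
    have := abs_sub_le_of_deriv_bound hx₁0
      (fun s hs => hψ s (hSpos₁ s hs)) hx₁d x₁ t le_rfl ht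
    have h1 := (abs_le.mp this).2
    linarith
  have hxdiv : Tendsto (fun x => x / S x) atTop atTop := by
    have hlow : ∀ᶠ x in atTop, Real.exp ((1/2) * Real.log x
        - (Real.log (S x₁) - (1/2) * Real.log x₁)) ≤ x / S x := by
      filter_upwards [eventually_ge_atTop x₁, eventually_gt_atTop (0:ℝ)] with x hx hx0
      have hSx : 0 < S x := hSpos₁ x hx
      have h1 : Real.log (S x) ≤ Real.log (S x₁) + (1/2) * (Real.log x - Real.log x₁) :=
        hlogbound x hx
      have h2 : x / S x = Real.exp (Real.log x - Real.log (S x)) := by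
        rw [Real.exp_sub, Real.exp_log hx0, Real.exp_log hSx]
      rw [h2]
      apply Real.exp_le_exp.mpr
      linarith
    apply tendsto_atTop_mono' atTop hlow
    apply Real.tendsto_exp_atTop.comp
    apply tendsto_atTop_add_const_right
    exact (tendsto_const_mul_atTop_of_pos (by norm_num : (0:ℝ) < 1/2)).mpr
      Real.tendsto_log_atTop
  have hutop : Tendsto u atTop atTop := by
    apply tendsto_atTop_mono' atTop ?_ ((tendsto_const_mul_atTop_of_pos hc₁).mpr hxdiv)
    filter_upwards [hu] with x hx
    calc c₁ * (x / S x) = c₁ * x / S x := by ring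
      _ ≤ u x := hx.1
  refine ⟨hutop, ?_⟩
  -- Step C : S (u x) / S x → 1
  have hdiff0 : Tendsto (fun x => Real.log (S (u x)) - Real.log (S x)) atTop (𝓝 0) := by
    rw [NormedAddCommGroup.tendsto_nhds_zero]
    intro ε hε
    obtain ⟨x₀, hx₀1, hx₀S, hx₀d, hx₀L⟩ := keybounds (ε/8) (by positivity)
    have hx₀0 : (0:ℝ) < x₀ := by linarith
    have hSpos₀ : ∀ t, x₀ ≤ t → 0 < S t := fun t ht =>
      lt_of_lt_of_le (Real.exp_pos 2) (hx₀S t ht)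
    -- Φ = ψ² has derivative bounded by (ε/4)/t on [x₀,∞)
    have hΦ : ∀ t, x₀ ≤ t → HasDerivAt (fun x => Real.log (S x) * Real.log (S x))
        (deriv S t / S t * Real.log (S t) + Real.log (S t) * (deriv S t / S t)) t := by
      intro t ht
      exact (hψ t (hSpos₀ t ht)).mul (hψ t (hSpos₀ t ht))
    have hΦd : ∀ t, x₀ ≤ t → |deriv S t / S t * Real.log (S t)
        + Real.log (S t) * (deriv S t / S t)| ≤ (ε/4) / t := by
      intro t ht
      have h1 := hx₀L t ht
      have h2 : |deriv S t / S t * Real.log (S t)| = |Real.log (S t) * (deriv S t / S t)| := by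
        rw [mul_comm]
      calc |deriv S t / S t * Real.log (S t) + Real.log (S t) * (deriv S t / S t)|
          ≤ |deriv S t / S t * Real.log (S t)| + |Real.log (S t) * (deriv S t / S t)| :=
            abs_add_le _ _
        _ ≤ ε/8/t + ε/8/t := by rw [h2]; linarith
        _ = (ε/4)/t := by ring
    have hΦbound := abs_sub_le_of_deriv_bound hx₀0 hΦ hΦd
    set K : ℝ := |Real.log c₁| + |Real.log c₂| + 1 with hK
    have hK0 : 0 < K := by simp only [hK]; positivity
    -- eventual hypotheses
    have hev : ∀ᶠ x in atTop, x₀ ≤ x ∧ x₀ ≤ u x ∧ (c₁ * x / S x ≤ u x ∧ u x ≤ c₂ * x) ∧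
        max 1 K ≤ Real.log (S x) ∧ 0 < x := by
      have hlogS : Tendsto (fun x => Real.log (S x)) atTop atTop :=
        Real.tendsto_log_atTop.comp htop
      filter_upwards [eventually_ge_atTop x₀, hutop.eventually_ge_atTop x₀, hu,
        hlogS.eventually_ge_atTop (max 1 K), eventually_gt_atTop (0:ℝ)] with x h1 h2 h3 h4 h5
      exact ⟨h1, h2, h3, h4, h5⟩
    filter_upwards [hev] with x ⟨hxx₀, hux₀, ⟨hu1, hu2⟩, hψx, hx0⟩
    have hSx : 0 < S x := hSpos₀ x hxx₀
    have hSu : 0 < S (u x) := hSpos₀ _ hux₀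
    have hu0 : 0 < u x := lt_of_lt_of_le hx₀0 hux₀
    have hψx1 : 1 ≤ Real.log (S x) := le_trans (le_max_left _ _) hψx
    have hψxK : K ≤ Real.log (S x) := le_trans (le_max_right _ _) hψx
    have hψu0 : 0 ≤ Real.log (S (u x)) := by
      have := hx₀S _ hux₀
      have : (2:ℝ) ≤ Real.log (S (u x)) := by
        rw [Real.le_log_iff_exp_le hSu]; exact this
      linarith
    have hc₂0 : 0 < c₂ := by
      have h := lt_of_lt_of_le hu0 hu2
      nlinarith
    have hnn1 : 0 ≤ |Real.log c₁| := abs_nonneg _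
    have hnn2 : 0 ≤ |Real.log c₂| := abs_nonneg _
    -- |log u - log x| ≤ ψ x + K
    have hlogdiff : |Real.log (u x) - Real.log x| ≤ Real.log (S x) + K := by
      rw [abs_le]
      constructor
      · -- log x - log u ≤ ψ x + K  i.e. -(ψx+K) ≤ log u - log x
        have h1 : Real.log (c₁ * x / S x) ≤ Real.log (u x) :=
          Real.log_le_log (by positivity) hu1
        rw [Real.log_div (by positivity) hSx.ne', Real.log_mul hc₁.ne' hx0.ne'] at h1
        have h2 : -|Real.log c₁| ≤ Real.log c₁ := neg_abs_le _
        simp only [hK]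
        linarith
      · have h1 : Real.log (u x) ≤ Real.log (c₂ * x) := Real.log_le_log hu0 hu2
        rw [Real.log_mul hc₂0.ne' hx0.ne'] at h1
        have h2 : Real.log c₂ ≤ |Real.log c₂| := le_abs_self _
        simp only [hK]
        linarith
    -- apply the Φ bound on [min, max]
    have hsq : |Real.log (S (u x)) * Real.log (S (u x)) -
        Real.log (S x) * Real.log (S x)| ≤ (ε/4) * (Real.log (S x) + K) := by
      rcases le_total (u x) x with hc | hc
      · have := hΦbound (u x) x hux₀ hc
        have hlog : Real.log x - Real.log (u x) ≤ Real.log (S x) + K := by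
          have := (abs_le.mp hlogdiff).1; linarith
        calc |Real.log (S (u x)) * Real.log (S (u x)) -
            Real.log (S x) * Real.log (S x)| = |Real.log (S x) * Real.log (S x) -
            Real.log (S (u x)) * Real.log (S (u x))| := abs_sub_comm _ _
          _ ≤ (ε/4) * (Real.log x - Real.log (u x)) := this
          _ ≤ (ε/4) * (Real.log (S x) + K) := by
              apply mul_le_mul_of_nonneg_left hlog (by positivity)
      · have := hΦbound x (u x) hxx₀ hc
        have hlog : Real.log (u x) - Real.log x ≤ Real.log (S x) + K := by
          have := (abs_le.mp hlogdiff).2; linarith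
        calc |Real.log (S (u x)) * Real.log (S (u x)) -
            Real.log (S x) * Real.log (S x)| ≤ (ε/4) * (Real.log (u x) - Real.log x) := this
          _ ≤ (ε/4) * (Real.log (S x) + K) := by
              apply mul_le_mul_of_nonneg_left hlog (by positivity)
    -- conclude |ψ(u) - ψ(x)| ≤ ε/2 < ε
    have hfact : |Real.log (S (u x)) - Real.log (S x)| *
        (Real.log (S (u x)) + Real.log (S x)) = |Real.log (S (u x)) * Real.log (S (u x)) -
        Real.log (S x) * Real.log (S x)| := by
      rw [show Real.log (S (u x)) * Real.log (S (u x)) - Real.log (S x) * Real.log (S x)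
          = (Real.log (S (u x)) - Real.log (S x)) * (Real.log (S (u x)) + Real.log (S x))
          by ring, abs_mul, abs_of_nonneg (by linarith : 0 ≤ Real.log (S (u x)) + Real.log (S x))]
    rw [Real.norm_eq_abs]
    have habs0 : 0 ≤ |Real.log (S (u x)) - Real.log (S x)| := abs_nonneg _
    nlinarith [hsq, hfact, hε, hψx1, hψxK, hψu0]
  -- final : exp of the difference
  have hexp := (Real.continuous_exp.tendsto 0).comp hdiff0
  rw [Real.exp_zero] at hexp
  apply hexp.congr'
  filter_upwards [eventually_ge_atTop x₁, hutop.eventually_ge_atTop x₁] with x h1 h2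
  have hSx := hSpos₁ x h1
  have hSu := hSpos₁ _ h2
  simp only [Function.comp]
  rw [Real.exp_sub, Real.exp_log hSx, Real.exp_log hSu]

/-- If the tail of `Z` is `exp (-S x)` then `S → ∞`. -/
lemma S_tendsto_atTop [IsProbabilityMeasure (ℙ : Measure Ω)]
    {Z : Ω → ℝ} (hZ : Measurable Z) {S : ℝ → ℝ}
    (h : ∀ x, tail Z x = Real.exp (-S x)) : Tendsto S atTop atTop := by
  rw [tendsto_atTop]
  intro M
  have hmeas : ∀ n : ℕ, NullMeasurableSet {ω | (n:ℝ) < Z ω} ℙ := fun n =>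
    (measurableSet_lt measurable_const hZ).nullMeasurableSet
  have hanti : Antitone (fun n : ℕ => {ω | (n:ℝ) < Z ω}) := by
    intro i j hij ω hω
    have hω' : (j:ℝ) < Z ω := hω
    exact lt_of_le_of_lt (by exact_mod_cast hij : (i:ℝ) ≤ (j:ℝ)) hω'
  have h0 := tendsto_measure_iInter_atTop hmeas hanti ⟨0, measure_ne_top _ _⟩
  have hint : (⋂ n : ℕ, {ω | (n:ℝ) < Z ω}) = ∅ := by
    ext ω
    simp only [Set.mem_iInter, Set.mem_setOf_eq, Set.mem_empty_iff_false, iff_false, not_forall,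
      not_lt]
    obtain ⟨n, hn⟩ := exists_nat_gt (Z ω)
    exact ⟨n, hn.le⟩
  rw [hint, measure_empty] at h0
  have hpos : (0:ℝ≥0∞) < ENNReal.ofReal (Real.exp (-(M+1))) :=
    ENNReal.ofReal_pos.mpr (Real.exp_pos _)
  obtain ⟨n, hn⟩ := (h0.eventually (gt_mem_nhds hpos)).exists
  rw [eventually_atTop]
  refine ⟨n, fun x hx => ?_⟩
  have hsub : {ω | x < Z ω} ⊆ {ω | (n:ℝ) < Z ω} := fun ω hω => lt_of_le_of_lt hx hω
  have h1 : tail Z x ≤ ((ℙ : Measure Ω) {ω | (n:ℝ) < Z ω}).toReal :=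
    ENNReal.toReal_mono (measure_ne_top _ _) (measure_mono hsub)
  have h2 : ((ℙ : Measure Ω) {ω | (n:ℝ) < Z ω}).toReal < Real.exp (-(M+1)) := by
    have := ENNReal.toReal_lt_of_lt_ofReal hn
    exact this
  rw [h x] at h1
  have h3 : Real.exp (-S x) < Real.exp (-M) := by
    calc Real.exp (-S x) ≤ _ := h1
      _ < Real.exp (-(M+1)) := h2
      _ < Real.exp (-M) := Real.exp_lt_exp.mpr (by linarith)
  have := Real.exp_lt_exp.mp h3
  linarith

/-- combine independence across a product structure -/
lemma indep_sup_sup {Ω' : Type*} {m0 : MeasurableSpace Ω'} {μ : Measure Ω'}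
    [IsProbabilityMeasure μ] {mA mB A₁ A₂ B₁ B₂ : MeasurableSpace Ω'}
    (hA₁ : A₁ ≤ mA) (hA₂ : A₂ ≤ mA) (hB₁ : B₁ ≤ mB) (hB₂ : B₂ ≤ mB)
    (hmA : mA ≤ m0) (hmB : mB ≤ m0)
    (hAB : Indep mA mB μ) (hA : Indep A₁ A₂ μ) (hB : Indep B₁ B₂ μ) :
    Indep (A₁ ⊔ B₁) (A₂ ⊔ B₂) μ := by
  have hABm := (Indep_iff _ _ _).mp hAB
  have hAm := (Indep_iff _ _ _).mp hA
  have hBm := (Indep_iff _ _ _).mp hB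
  let p : MeasurableSpace Ω' → MeasurableSpace Ω' → Set (Set Ω') :=
    fun mx my => {s | ∃ u v, MeasurableSet[mx] u ∧ MeasurableSet[my] v ∧ s = u ∩ v}
  have hgen : ∀ mx my : MeasurableSpace Ω', mx ⊔ my = MeasurableSpace.generateFrom (p mx my) := by
    intro mx my
    apply le_antisymm
    · refine sup_le ?_ ?_ <;> intro s hs <;> apply MeasurableSpace.measurableSet_generateFrom
      · exact ⟨s, Set.univ, hs, MeasurableSet.univ, (Set.inter_univ s).symm⟩
      · exact ⟨Set.univ, s, MeasurableSet.univ, hs, (Set.univ_inter s).symm⟩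
    · refine MeasurableSpace.generateFrom_le ?_
      rintro s ⟨u, v, hu, hv, rfl⟩
      exact MeasurableSet.inter ((le_sup_left : mx ≤ mx ⊔ my) u hu)
        ((le_sup_right : my ≤ mx ⊔ my) v hv)
  have hpi : ∀ mx my : MeasurableSpace Ω', IsPiSystem (p mx my) := by
    rintro mx my s ⟨u, v, hu, hv, rfl⟩ s' ⟨u', v', hu', hv', rfl⟩ -
    exact ⟨u ∩ u', v ∩ v', hu.inter hu', hv.inter hv', Set.inter_inter_inter_comm u v u' v'⟩
  refine IndepSets.indep (sup_le (hA₁.trans hmA) (hB₁.trans hmB))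
    (sup_le (hA₂.trans hmA) (hB₂.trans hmB)) (hpi A₁ B₁) (hpi A₂ B₂)
    (hgen A₁ B₁) (hgen A₂ B₂) ?_
  rw [IndepSets_iff]
  rintro t1 t2 ⟨u, v, hu, hv, rfl⟩ ⟨u', v', hu', hv', rfl⟩
  have e1 : (u ∩ v) ∩ (u' ∩ v') = (u ∩ u') ∩ (v ∩ v') := Set.inter_inter_inter_comm u v u' v'
  rw [e1, hABm _ _ ((hA₁ u hu).inter (hA₂ u' hu')) ((hB₁ v hv).inter (hB₂ v' hv')),
    hAm _ _ hu hu', hBm _ _ hv hv', hABm _ _ (hA₁ u hu) (hB₁ v hv),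
    hABm _ _ (hA₂ u' hu') (hB₂ v' hv')]
  ring


/-- **Example 2.6** (stochastic volatility with bounded volatility).
For `X_i = σ_i Y_i` with bounded stationary `m`-dependent `(σ_i)` independent of
iid `(Y_i)`, `F_Y ∈ MDA(Λ) ∩ 𝒮` with `F̄_Y = exp(-S_Y)` satisfying the
Bojanic–Seneta condition, and `F` of `X` subexponential:
`S(x) = S_Y(x)(1+o(1))` and condition `C3` holds for `g(x) = x/S(x)`. -/
theorem statement14
    {Ω : Type*} [MeasureSpace Ω] [IsProbabilityMeasure (ℙ : Measure Ω)]
    (σv : ℕ → Ω → ℝ) (Y : ℕ → Ω → ℝ)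
    (hσmeas : ∀ i, Measurable (σv i)) (hYmeas : ∀ i, Measurable (Y i))
    (hσstat : Stationary σv)
    (m : ℕ) (hm : 1 ≤ m) (hσdep : MDep σv m)
    (a b : ℝ) (ha : 0 < a) (ha1 : a < 1) (hb : 1 < b)
    (hbound : ∀ᵐ ω ∂ℙ, a ≤ σv 0 ω ∧ σv 0 ω ≤ b)
    (hYiid : IID Y)
    (hindep : IndepFun (fun ω => fun i => σv i ω) (fun ω => fun i => Y i ω) ℙ)
    (S_Y : ℝ → ℝ) (hYtail : ∀ x : ℝ, tail (Y 0) x = Real.exp (-S_Y x))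
    (pp pm : ℝ) (hYS : ClassS (Y 0) pp pm) (hYMDA : GumbelMDA (Y 0))
    (hS_Y_diff : Differentiable ℝ S_Y)
    (hBS : Tendsto (fun x => x * deriv S_Y x / S_Y x * Real.log (S_Y x))
      atTop (𝓝 0))
    (X : ℕ → Ω → ℝ) (hX : ∀ i ω, X i ω = σv i ω * Y i ω)
    -- assume the distribution of `X` is subexponential
    (hXsub : SubexponentialMeasure (Measure.map (fun ω => max (X 0 ω) 0) ℙ))
    -- `g(x) = x/S(x)` is assumed to be (eventually) increasing
    (hg_mono : ∃ x₀ : ℝ,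
      MonotoneOn (fun x => x / (-Real.log (tail (X 0) x))) (Set.Ici x₀)) :
    -- `S(x) = S_Y(x)(1 + o(1))`
    Tendsto (fun x => (-Real.log (tail (X 0) x)) / S_Y x) atTop (𝓝 1) ∧
    -- `(X_i)` is `m`-dependent
    MDep X m ∧
    -- condition C3 holds, with the bound `exp(-S_Y(x)(1+o(1)))`
    (∀ ε : ℝ, 0 < ε → ∀ h : ℕ, 1 ≤ h → h ≤ m →
      (∃ e : ℝ → ℝ, Tendsto e atTop (𝓝 0) ∧ ∀ᶠ x in atTop,
        pr {ω | ε * (x / (-Real.log (tail (X 0) x))) < |X 0 ω| ∧ ε * x < |X h ω|}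
            / tail (X 0) x
          ≤ Real.exp (-(S_Y x) * (1 + e x))) ∧
      Tendsto (fun x =>
        pr {ω | ε * (x / (-Real.log (tail (X 0) x))) < |X 0 ω| ∧ ε * x < |X h ω|}
          / tail (X 0) x) atTop (𝓝 0)) := by
  classical
  have hb0 : (0:ℝ) < b := by linarith
  -- (0) law of σv i equals law of σv 0 (stationarity), hence a.s. bounds for every index
  have hσlaw : ∀ i : ℕ, Measure.map (σv i) ℙ = Measure.map (σv 0) ℙ := by
    intro i
    have hst := hσstat i 1
    have hmi : Measurable (fun ω => fun j : Fin 1 => σv (i + (j:ℕ)) ω) :=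
      measurable_pi_lambda _ fun j => hσmeas _
    have hm0 : Measurable (fun ω => fun j : Fin 1 => σv (j:ℕ) ω) :=
      measurable_pi_lambda _ fun j => hσmeas _
    calc Measure.map (σv i) ℙ
        = Measure.map ((fun f : Fin 1 → ℝ => f 0) ∘
            (fun ω => fun j : Fin 1 => σv (i + (j:ℕ)) ω)) ℙ := by
          congr 1
      _ = Measure.map (fun f : Fin 1 → ℝ => f 0)
            (Measure.map (fun ω => fun j : Fin 1 => σv (i + (j:ℕ)) ω) ℙ) :=
          (Measure.map_map (measurable_pi_apply 0) hmi).symm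
      _ = Measure.map (fun f : Fin 1 → ℝ => f 0)
            (Measure.map (fun ω => fun j : Fin 1 => σv (j:ℕ) ω) ℙ) := by rw [hst]
      _ = Measure.map (σv 0) ℙ := by
          rw [Measure.map_map (measurable_pi_apply 0) hm0]
          congr 1
  have hbound' : ∀ i : ℕ, ∀ᵐ ω ∂(ℙ : Measure Ω), a ≤ σv i ω ∧ σv i ω ≤ b := by
    intro i
    have hIcc : MeasurableSet ((Set.Icc a b)ᶜ) := measurableSet_Icc.compl
    have h0 : (ℙ : Measure Ω) ((σv 0) ⁻¹' (Set.Icc a b)ᶜ) = 0 := by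
      rw [show (σv 0) ⁻¹' (Set.Icc a b)ᶜ = {ω | ¬(a ≤ σv 0 ω ∧ σv 0 ω ≤ b)} by
        ext ω; simp [Set.mem_Icc]]
      exact ae_iff.mp hbound
    have hi : (ℙ : Measure Ω) ((σv i) ⁻¹' (Set.Icc a b)ᶜ) = 0 := by
      rw [← Measure.map_apply (hσmeas i) hIcc, hσlaw i,
        Measure.map_apply (hσmeas 0) hIcc]
      exact h0
    rw [ae_iff, show {ω | ¬(a ≤ σv i ω ∧ σv i ω ≤ b)} = (σv i) ⁻¹' (Set.Icc a b)ᶜ by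
      ext ω; simp [Set.mem_Icc]]
    exact hi
  -- (1) tails of Y: S_Y tends to infinity, atail law invariance
  have hSYtop : Tendsto S_Y atTop atTop := S_tendsto_atTop (hYmeas 0) hYtail
  have hSY1 : ∀ᶠ x in atTop, (1:ℝ) ≤ S_Y x := hSYtop.eventually_ge_atTop 1
  have hSYpos : ∀ᶠ x in atTop, (0:ℝ) < S_Y x := hSYtop.eventually_gt_atTop 0
  have habsmeas : ∀ r : ℝ, MeasurableSet {y : ℝ | r < |y|} := fun r =>
    measurableSet_lt measurable_const measurable_abs
  have hatail_eq : ∀ (j : ℕ) (x : ℝ), atail (Y j) x = atail (Y 0) x := by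
    intro j x
    unfold atail pr
    congr 1
    calc (ℙ : Measure Ω) {ω | x < |Y j ω|}
        = Measure.map (Y j) ℙ {y | x < |y|} := by
          rw [Measure.map_apply (hYmeas j) (habsmeas x)]; rfl
      _ = Measure.map (Y 0) ℙ {y | x < |y|} := by rw [hYiid.2 j]
      _ = (ℙ : Measure Ω) {ω | x < |Y 0 ω|} := by
          rw [Measure.map_apply (hYmeas 0) (habsmeas x)]; rfl
  -- (2) two-sided bounds on the tail of X 0
  have htail_lb : ∀ x : ℝ, 0 ≤ x → Real.exp (-S_Y (x/a)) ≤ tail (X 0) x := by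
    intro x hx
    rw [← hYtail (x/a)]
    apply ENNReal.toReal_mono (measure_ne_top _ _)
    apply measure_mono_ae
    filter_upwards [hbound' 0] with ω h0 hω
    have hω' : x / a < Y 0 ω := hω
    have hY0 : 0 ≤ Y 0 ω := le_trans (by positivity) hω'.le
    have h1 : x < Y 0 ω * a := (div_lt_iff₀ ha).mp hω'
    show x < X 0 ω
    rw [hX 0 ω]
    nlinarith [h0.1, mul_nonneg (sub_nonneg.mpr h0.1) hY0]
  have htail_ub : ∀ x : ℝ, 0 ≤ x → tail (X 0) x ≤ Real.exp (-S_Y (x/b)) := by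
    intro x hx
    rw [← hYtail (x/b)]
    apply ENNReal.toReal_mono (measure_ne_top _ _)
    apply measure_mono_ae
    filter_upwards [hbound' 0] with ω h0 hω
    have hω' : x < X 0 ω := hω
    rw [hX 0 ω] at hω'
    have hσpos : 0 < σv 0 ω := lt_of_lt_of_le ha h0.1
    have hYpos : 0 < Y 0 ω := by
      by_contra hc
      push_neg at hc
      have : σv 0 ω * Y 0 ω ≤ 0 := mul_nonpos_iff.mpr (Or.inl ⟨hσpos.le, hc⟩)
      linarith
    have h2 : σv 0 ω * Y 0 ω ≤ b * Y 0 ω := mul_le_mul_of_nonneg_right h0.2 hYpos.le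
    show x / b < Y 0 ω
    rw [div_lt_iff₀ hb0]
    nlinarith
  have hS_lb : ∀ x : ℝ, 0 ≤ x → S_Y (x/b) ≤ -Real.log (tail (X 0) x) := by
    intro x hx
    have h1 := htail_ub x hx
    have hpos : 0 < tail (X 0) x := lt_of_lt_of_le (Real.exp_pos _) (htail_lb x hx)
    have h2 := Real.log_le_log hpos h1
    rw [Real.log_exp] at h2
    linarith
  have hS_ub : ∀ x : ℝ, 0 ≤ x → -Real.log (tail (X 0) x) ≤ S_Y (x/a) := by
    intro x hx
    have h2 := Real.log_le_log (Real.exp_pos _) (htail_lb x hx)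
    rw [Real.log_exp] at h2
    linarith
  -- (3) slow-variation facts via the ratio lemma
  have hraev : ∀ᶠ x in atTop, (1/a) * x / S_Y x ≤ x / a ∧ x / a ≤ (1/a) * x := by
    filter_upwards [hSY1, eventually_ge_atTop (0:ℝ)] with x h1 h0
    refine ⟨?_, le_of_eq (by ring)⟩
    rw [show (1/a) * x = x / a by ring]
    exact div_le_self (by positivity) h1
  obtain ⟨-, hra⟩ := ratio_lemma hS_Y_diff hSYtop hBS
    (by positivity : (0:ℝ) < 1/a) hraev
  have hrbev : ∀ᶠ x in atTop, (1/b) * x / S_Y x ≤ x / b ∧ x / b ≤ (1/b) * x := by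
    filter_upwards [hSY1, eventually_ge_atTop (0:ℝ)] with x h1 h0
    refine ⟨?_, le_of_eq (by ring)⟩
    rw [show (1/b) * x = x / b by ring]
    exact div_le_self (by positivity) h1
  obtain ⟨-, hrb⟩ := ratio_lemma hS_Y_diff hSYtop hBS
    (by positivity : (0:ℝ) < 1/b) hrbev
  -- bounds on  S := -log tail X0  needed repeatedly
  have hSX1 : ∀ᶠ x in atTop, (1:ℝ) ≤ -Real.log (tail (X 0) x) := by
    have hdb : Tendsto (fun x : ℝ => x / b) atTop atTop :=
      tendsto_id.atTop_div_const hb0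
    filter_upwards [eventually_ge_atTop (0:ℝ),
      (hSYtop.comp hdb).eventually_ge_atTop 1] with x h0 h1
    exact le_trans h1 (hS_lb x h0)
  have hSX2 : ∀ᶠ x in atTop, -Real.log (tail (X 0) x) ≤ 2 * S_Y x := by
    filter_upwards [eventually_ge_atTop (0:ℝ),
      hra.eventually (gt_mem_nhds one_lt_two), hSYpos] with x h0 h2 hp
    have h3 : S_Y (x / a) < 2 * S_Y x := (div_lt_iff₀ hp).mp h2
    linarith [hS_ub x h0]
  -- (4) m-dependence of X
  have hFσ : Measurable (fun ω => fun i : ℕ => σv i ω) := measurable_pi_lambda _ hσmeas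
  have hFY : Measurable (fun ω => fun i : ℕ => Y i ω) := measurable_pi_lambda _ hYmeas
  have hAsub : ∀ s : ℕ, MeasurableSpace.comap (σv s) inferInstance ≤
      MeasurableSpace.comap (fun ω => fun i : ℕ => σv i ω) inferInstance := by
    intro s
    have e1 : σv s = (fun f : ℕ → ℝ => f s) ∘ (fun ω => fun i : ℕ => σv i ω) := rfl
    rw [e1, ← MeasurableSpace.comap_comp]
    exact MeasurableSpace.comap_mono (measurable_pi_apply s).comap_le
  have hBsub : ∀ s : ℕ, MeasurableSpace.comap (Y s) inferInstance ≤
      MeasurableSpace.comap (fun ω => fun i : ℕ => Y i ω) inferInstance := by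
    intro s
    have e1 : Y s = (fun f : ℕ → ℝ => f s) ∘ (fun ω => fun i : ℕ => Y i ω) := rfl
    rw [e1, ← MeasurableSpace.comap_comp]
    exact MeasurableSpace.comap_mono (measurable_pi_apply s).comap_le
  have hcomapX : ∀ s : ℕ, MeasurableSpace.comap (X s) inferInstance ≤
      MeasurableSpace.comap (σv s) inferInstance ⊔ MeasurableSpace.comap (Y s) inferInstance := by
    intro s
    have hXs : X s = (fun p : ℝ × ℝ => p.1 * p.2) ∘ (fun ω => (σv s ω, Y s ω)) := by
      funext ω; exact hX s ω
    rw [hXs, ← MeasurableSpace.comap_comp]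
    refine le_trans (MeasurableSpace.comap_mono measurable_mul.comap_le) ?_
    have hprodeq : (Prod.instMeasurableSpace : MeasurableSpace (ℝ × ℝ)) =
        MeasurableSpace.comap Prod.fst inferInstance ⊔
        MeasurableSpace.comap Prod.snd inferInstance := rfl
    rw [hprodeq, MeasurableSpace.comap_sup, MeasurableSpace.comap_comp,
      MeasurableSpace.comap_comp]
    exact le_rfl
  have hmdepX : MDep X m := by
    intro t h hth
    have hXle : ∀ I : Set ℕ, (⨆ s ∈ I, MeasurableSpace.comap (X s) inferInstance) ≤
        (⨆ s ∈ I, MeasurableSpace.comap (σv s) inferInstance) ⊔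
        (⨆ s ∈ I, MeasurableSpace.comap (Y s) inferInstance) := by
      intro I
      refine iSup₂_le fun s hs => le_trans (hcomapX s) (sup_le_sup ?_ ?_)
      · exact le_iSup₂ (f := fun s _ => MeasurableSpace.comap (σv s) inferInstance) s hs
      · exact le_iSup₂ (f := fun s _ => MeasurableSpace.comap (Y s) inferInstance) s hs
    refine indep_of_indep_of_le_left (indep_of_indep_of_le_right ?_ (hXle _)) (hXle _)
    refine indep_sup_sup (iSup₂_le fun s _ => hAsub s) (iSup₂_le fun s _ => hAsub s)
      (iSup₂_le fun s _ => hBsub s) (iSup₂_le fun s _ => hBsub s)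
      hFσ.comap_le hFY.comap_le ((IndepFun_iff_Indep _ _ _).mp hindep)
      (hσdep t h hth) ?_
    have h_le : ∀ n : ℕ, MeasurableSpace.comap (Y n) inferInstance ≤ _ :=
      fun n => (hYmeas n).comap_le
    have hYind : iIndep (fun i => MeasurableSpace.comap (Y i) inferInstance) ℙ :=
      (iIndepFun_iff_iIndep (fun _ => inferInstance) _ _).mp hYiid.1
    refine indep_of_indep_of_le_right (indep_biSup_compl h_le hYind (Set.Iic t)) ?_
    refine iSup₂_le fun s hs =>
      le_iSup₂ (f := fun s _ => MeasurableSpace.comap (Y s) inferInstance) s ?_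
    have hs' : t + h ≤ s := hs
    simp only [Set.mem_compl_iff, Set.mem_Iic, not_le]
    omega
  -- assemble
  refine ⟨?_, hmdepX, ?_⟩
  · -- part 1 : S(x)/S_Y(x) → 1
    refine tendsto_of_tendsto_of_tendsto_of_le_of_le' hrb hra ?_ ?_
    · filter_upwards [eventually_ge_atTop (0:ℝ), hSYpos] with x h0 hp
      exact div_le_div_of_nonneg_right (hS_lb x h0) hp.le
    · filter_upwards [eventually_ge_atTop (0:ℝ), hSYpos] with x h0 hp
      exact div_le_div_of_nonneg_right (hS_ub x h0) hp.le
  · -- part 3 : condition C3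
    intro ε hε h h1 hm'
    have hh0 : (0:ℕ) ≠ h := by omega
    have hppos : 0 < pp := hYS.2.pos
    set C : ℝ := 2 / pp with hC
    have hCpos : 0 < C := by rw [hC]; positivity
    have hC2pos : (0:ℝ) < C^2 := by positivity
    -- ratio/limit facts for the two thresholds
    have hu2ev : ∀ᶠ x in atTop, (ε/b) * x / S_Y x ≤ ε * x / b ∧ ε * x / b ≤ (ε/b) * x := by
      filter_upwards [hSY1, eventually_ge_atTop (0:ℝ)] with x hs1 h0
      refine ⟨?_, le_of_eq (by ring)⟩
      rw [show (ε/b) * x = ε * x / b by ring]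
      exact div_le_self (by positivity) hs1
    obtain ⟨hu2top, hr2⟩ := ratio_lemma hS_Y_diff hSYtop hBS
      (by positivity : (0:ℝ) < ε/b) hu2ev
    have hu3ev : ∀ᶠ x in atTop,
        (ε/(2*b)) * x / S_Y x ≤ ε * (x / (-Real.log (tail (X 0) x))) / b ∧
        ε * (x / (-Real.log (tail (X 0) x))) / b ≤ (ε/b) * x := by
      filter_upwards [hSX2, hSX1, hSYpos, eventually_ge_atTop (0:ℝ)] with x h2 hs1 hp h0
      have hSXpos : 0 < -Real.log (tail (X 0) x) := by linarith
      constructor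
      · have e1 : (ε/(2*b)) * x / S_Y x = ε * (x / (2 * S_Y x)) / b := by
          rw [div_mul_eq_mul_div, div_div, ← mul_div_assoc, div_div]
          ring_nf
        rw [e1]
        have hx2 : x / (2 * S_Y x) ≤ x / (-Real.log (tail (X 0) x)) :=
          div_le_div_of_nonneg_left h0 hSXpos h2
        exact div_le_div_of_nonneg_right
          (mul_le_mul_of_nonneg_left hx2 hε.le) hb0.le
      · calc ε * (x / (-Real.log (tail (X 0) x))) / b ≤ ε * x / b :=
              div_le_div_of_nonneg_right
                (mul_le_mul_of_nonneg_left (div_le_self h0 hs1) hε.le) hb0.le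
          _ = (ε/b) * x := by ring
    obtain ⟨hu3top, hr3⟩ := ratio_lemma hS_Y_diff hSYtop hBS
      (by positivity : (0:ℝ) < ε/(2*b)) hu3ev
    -- bound for the two-sided tail of Y
    have htail_le_atail : ∀ v : ℝ, tail (Y 0) v ≤ atail (Y 0) v := fun v =>
      ENNReal.toReal_mono (measure_ne_top _ _)
        (measure_mono fun ω hω => show v < |Y 0 ω| from
          lt_of_lt_of_le hω (le_abs_self _))
    have hatail_bound : ∀ᶠ v in atTop, atail (Y 0) v ≤ C * Real.exp (-S_Y v) := by
      filter_upwards [hYS.2.plus.eventually (lt_mem_nhds (half_lt_self hppos))] with v hv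
      have htv : tail (Y 0) v = Real.exp (-S_Y v) := hYtail v
      have hta : 0 < atail (Y 0) v :=
        lt_of_lt_of_le (htv ▸ Real.exp_pos _) (htail_le_atail v)
      rw [lt_div_iff₀ hta] at hv
      rw [htv] at hv
      rw [hC, div_mul_eq_mul_div, le_div_iff₀ hppos]
      nlinarith
    -- numerator bound
    have hNle : ∀ x : ℝ,
        pr {ω | ε * (x / (-Real.log (tail (X 0) x))) < |X 0 ω| ∧ ε * x < |X h ω|} ≤
        atail (Y 0) (ε * (x / (-Real.log (tail (X 0) x))) / b) * atail (Y 0) (ε * x / b) := by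
      intro x
      have hstep : (ℙ : Measure Ω)
          {ω | ε * (x / (-Real.log (tail (X 0) x))) < |X 0 ω| ∧ ε * x < |X h ω|} ≤
          ℙ ((Y 0) ⁻¹' {y | ε * (x / (-Real.log (tail (X 0) x))) / b < |y|} ∩
             (Y h) ⁻¹' {y | ε * x / b < |y|}) := by
        apply measure_mono_ae
        filter_upwards [hbound' 0, hbound' h] with ω h0 hh hmem
        obtain ⟨hm1, hm2⟩ := hmem
        have key : ∀ (i : ℕ) (r : ℝ), a ≤ σv i ω → σv i ω ≤ b → r < |X i ω| →
            r / b < |Y i ω| := by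
          intro i r hia hib hri
          have hXi : |X i ω| ≤ b * |Y i ω| := by
            rw [hX i ω, abs_mul, abs_of_nonneg (by linarith : (0:ℝ) ≤ σv i ω)]
            exact mul_le_mul_of_nonneg_right hib (abs_nonneg _)
          rw [div_lt_iff₀ hb0]
          nlinarith
        exact ⟨key 0 _ h0.1 h0.2 hm1, key h _ hh.1 hh.2 hm2⟩
      have hind : IndepFun (Y 0) (Y h) ℙ := hYiid.1.indepFun hh0
      calc pr {ω | ε * (x / (-Real.log (tail (X 0) x))) < |X 0 ω| ∧ ε * x < |X h ω|}
          ≤ ((ℙ : Measure Ω) ((Y 0) ⁻¹' {y | ε * (x / (-Real.log (tail (X 0) x))) / b < |y|} ∩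
             (Y h) ⁻¹' {y | ε * x / b < |y|})).toReal :=
            ENNReal.toReal_mono (measure_ne_top _ _) hstep
        _ = ((ℙ : Measure Ω) ((Y 0) ⁻¹' {y | ε * (x / (-Real.log (tail (X 0) x))) / b < |y|}) *
             (ℙ : Measure Ω) ((Y h) ⁻¹' {y | ε * x / b < |y|})).toReal := by
            rw [hind.measure_inter_preimage_eq_mul _ _ (habsmeas _) (habsmeas _)]
        _ = atail (Y 0) (ε * (x / (-Real.log (tail (X 0) x))) / b) *
            atail (Y h) (ε * x / b) := ENNReal.toReal_mul
        _ = atail (Y 0) (ε * (x / (-Real.log (tail (X 0) x))) / b) *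
            atail (Y 0) (ε * x / b) := by rw [hatail_eq h]
    -- the quantitative bound
    have hD : ∀ᶠ x in atTop,
        pr {ω | ε * (x / (-Real.log (tail (X 0) x))) < |X 0 ω| ∧ ε * x < |X h ω|}
          / tail (X 0) x ≤
        Real.exp (Real.log (C^2) + (S_Y (x/a) - S_Y (ε * x / b) -
          S_Y (ε * (x / (-Real.log (tail (X 0) x))) / b))) := by
      filter_upwards [eventually_ge_atTop (0:ℝ), hu3top.eventually hatail_bound,
        hu2top.eventually hatail_bound] with x h0 h3 h2'
      have hnum := (hNle x).trans
        (mul_le_mul h3 h2' ENNReal.toReal_nonneg (by positivity))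
      have hfrac := div_le_div₀ (by positivity) hnum (Real.exp_pos (-S_Y (x/a)))
        (htail_lb x h0)
      refine hfrac.trans (le_of_eq ?_)
      rw [Real.exp_add, Real.exp_log hC2pos,
        show S_Y (x/a) - S_Y (ε * x / b) - S_Y (ε * (x / (-Real.log (tail (X 0) x))) / b)
          = -S_Y (ε * (x / (-Real.log (tail (X 0) x))) / b) + (-S_Y (ε * x / b) + S_Y (x/a))
          by ring,
        Real.exp_add, Real.exp_add, div_eq_mul_inv, Real.exp_neg (S_Y (x/a)), inv_inv]
      ring
    -- the error function e
    set efun : ℝ → ℝ := fun x =>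
      -(S_Y (x/a) / S_Y x - S_Y (ε * x / b) / S_Y x -
        S_Y (ε * (x / (-Real.log (tail (X 0) x))) / b) / S_Y x +
        Real.log (C^2) / S_Y x) - 1 with hefun
    have hetend : Tendsto efun atTop (𝓝 0) := by
      have h4 : Tendsto (fun x => Real.log (C^2) / S_Y x) atTop (𝓝 0) :=
        tendsto_const_nhds.div_atTop hSYtop
      have h5 := ((((hra.sub hr2).sub hr3).add h4).neg).sub_const 1
      have h6 : -(1 - 1 - 1 + 0 : ℝ) - 1 = 0 := by norm_num
      rw [h6] at h5
      exact h5
    have hbound2 : ∀ᶠ x in atTop,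
        pr {ω | ε * (x / (-Real.log (tail (X 0) x))) < |X 0 ω| ∧ ε * x < |X h ω|}
          / tail (X 0) x ≤ Real.exp (-(S_Y x) * (1 + efun x)) := by
      filter_upwards [hD, hSYpos] with x hx hp
      have h6 : -(S_Y x) * (1 + efun x) =
          Real.log (C^2) + (S_Y (x/a) - S_Y (ε * x / b) -
            S_Y (ε * (x / (-Real.log (tail (X 0) x))) / b)) := by
        rw [hefun]
        field_simp
        ring
      rw [h6]
      exact hx
    refine ⟨⟨efun, hetend, hbound2⟩, ?_⟩
    have hexp : Tendsto (fun x => Real.exp (-(S_Y x) * (1 + efun x))) atTop (𝓝 0) := by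
      have h7 : Tendsto (fun x => S_Y x * (1 + efun x)) atTop atTop := by
        refine hSYtop.atTop_mul_pos (by norm_num : (0:ℝ) < 1) ?_
        have := hetend.const_add (1:ℝ)
        rw [add_zero] at this
        exact this
      have h8 := Real.tendsto_exp_atBot.comp (tendsto_neg_atTop_atBot.comp h7)
      refine h8.congr fun x => ?_
      simp only [Function.comp_apply]
      rw [neg_mul]
    refine squeeze_zero' ?_ hbound2 hexp
    filter_upwards [eventually_ge_atTop (0:ℝ)] with x h0
    have hpos : 0 < tail (X 0) x := lt_of_lt_of_le (Real.exp_pos _) (htail_lb x h0)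
    exact div_nonneg ENNReal.toReal_nonneg hpos.le

end PLD
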